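/- Fix a real number κ > 1 and a point 𝔷 in the upper half-plane. For z in the upper half-plane with z ≠ 𝔷, define G(z) := y^{κ-1} (𝔷 - z̄)^{1-κ} (𝔷 - z)^{-1}, where y = Im z. Then ξ_{2-κ}(G)(z) = (κ-1)(𝔷̄ - z)^{-κ}, where ξ_{2-κ}(G)(z) := 2i y^{2-κ} · conjugate(∂G/∂z̄)(z). -/

import Mathlib

open Complex

noncomputable section

/-- Partial derivative in the real (`x`) direction. -/
def pdx (F : ℂ → ℂ) (z : ℂ) : ℂ := fderiv ℝ F z 1

/-- Partial derivative in the imaginary (`y`) direction. -/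
def pdy (F : ℂ → ℂ) (z : ℂ) : ℂ := fderiv ℝ F z Complex.I

/-- Wirtinger derivative `∂/∂z`. -/
def wdz (F : ℂ → ℂ) (z : ℂ) : ℂ := (pdx F z - Complex.I * pdy F z) / 2

/-- Wirtinger derivative `∂/∂z̄`. -/
def wdzbar (F : ℂ → ℂ) (z : ℂ) : ℂ := (pdx F z + Complex.I * pdy F z) / 2

/-- The operator `ξ_κ F := 2i y^κ ⋅ conj(∂F/∂z̄)`. -/
def xiOp (κ : ℝ) (F : ℂ → ℂ) (z : ℂ) : ℂ :=
  2 * Complex.I * ((z.im ^ κ : ℝ) : ℂ) * (starRingEnd ℂ) (wdzbar F z)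

/-- The weight `κ` hyperbolic Laplacian
`Δ_κ := -y²(∂²/∂x² + ∂²/∂y²) + iκy(∂/∂x + i ∂/∂y)`. -/
def hypLap (κ : ℝ) (F : ℂ → ℂ) (z : ℂ) : ℂ :=
  -(z.im : ℂ) ^ 2 * (pdx (pdx F) z + pdy (pdy F) z)
    + Complex.I * κ * z.im * (pdx F z + Complex.I * pdy F z)

/-- The Maass raising operator `R_κ := 2i ∂/∂z + κ/y`. -/
def raiseOp (κ : ℝ) (F : ℂ → ℂ) (z : ℂ) : ℂ :=
  2 * Complex.I * wdz F z + (κ : ℂ) / z.im * F z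

/-- The Maass lowering operator `L_κ := -2i y² ∂/∂z̄`. -/
def lowerOp (κ : ℝ) (F : ℂ → ℂ) (z : ℂ) : ℂ :=
  -2 * Complex.I * (z.im : ℂ) ^ 2 * wdzbar F z

end

/-- For `κ > 1` and `𝔷 ∈ ℍ`, setting `G(z) = y^{κ-1} (𝔷 - z̄)^{1-κ} (𝔷 - z)^{-1}`,
one has `ξ_{2-κ}(G)(z) = (κ-1)(𝔷̄ - z)^{-κ}` for `z ∈ ℍ`, `z ≠ 𝔷`. -/
theorem xi_of_G (κ : ℝ) (hκ : 1 < κ) (𝔷 : ℂ) (h𝔷 : 0 < 𝔷.im) :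
    ∀ z : ℂ, 0 < z.im → z ≠ 𝔷 →
      xiOp (2 - κ)
        (fun w => ((w.im ^ (κ - 1) : ℝ) : ℂ) * (𝔷 - (starRingEnd ℂ) w) ^ ((1 - κ : ℝ) : ℂ)
          * (𝔷 - w)⁻¹) z
      = ((κ : ℂ) - 1) * ((starRingEnd ℂ) 𝔷 - z) ^ ((-κ : ℝ) : ℂ) := by
  intro z hz hne
  have hy : (0:ℝ) < z.im := hz
  set a : ℂ := 𝔷 - (starRingEnd ℂ) z with ha_def
  set b : ℂ := 𝔷 - z with hb_def
  have ha_im : 0 < a.im := by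
    simp only [ha_def, Complex.sub_im, Complex.conj_im]; linarith
  have ha_slit : a ∈ Complex.slitPlane := Complex.mem_slitPlane_iff.2 (Or.inr ha_im.ne')
  have ha : a ≠ 0 := Complex.slitPlane_ne_zero ha_slit
  have hb : b ≠ 0 := sub_ne_zero.2 hne.symm
  have h1r : HasFDerivAt (fun w : ℂ => w.im ^ (κ - 1))
      (((κ - 1) * z.im ^ (κ - 1 - 1)) • (Complex.imCLM : ℂ →L[ℝ] ℝ)) z :=
    (Real.hasDerivAt_rpow_const (p := κ - 1) (Or.inl hy.ne')).comp_hasFDerivAt z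
      Complex.imCLM.hasFDerivAt
  have h1 : HasFDerivAt (fun w : ℂ => ((w.im ^ (κ - 1) : ℝ) : ℂ))
      (Complex.ofRealCLM.comp (((κ - 1) * z.im ^ (κ - 1 - 1)) • (Complex.imCLM : ℂ →L[ℝ] ℝ))) z :=
    Complex.ofRealCLM.hasFDerivAt.comp z h1r
  have hg2 : HasFDerivAt (fun w : ℂ => 𝔷 - (starRingEnd ℂ) w)
      (-(Complex.conjCLE : ℂ →L[ℝ] ℂ)) z :=
    (Complex.conjCLE.hasFDerivAt (x := z)).const_sub 𝔷
  have h2d : HasDerivAt (fun u : ℂ => u ^ ((1 - κ : ℝ) : ℂ))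
      (((1 - κ : ℝ) : ℂ) * a ^ (((1 - κ : ℝ) : ℂ) - 1)) a :=
    (Complex.hasStrictDerivAt_cpow_const ha_slit).hasDerivAt
  have h2 : HasFDerivAt (fun w : ℂ => (𝔷 - (starRingEnd ℂ) w) ^ ((1 - κ : ℝ) : ℂ))
      ((((1 - κ : ℝ) : ℂ) * a ^ (((1 - κ : ℝ) : ℂ) - 1)) • (-(Complex.conjCLE : ℂ →L[ℝ] ℂ))) z :=
    by have := h2d.comp_hasFDerivAt z hg2; exact this
  have h3d : HasDerivAt (fun w : ℂ => (𝔷 - w)⁻¹) (-(-1) / b ^ 2) z :=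
    ((hasDerivAt_id z).const_sub 𝔷).inv hb
  have h3 : HasFDerivAt (fun w : ℂ => (𝔷 - w)⁻¹)
      ((ContinuousLinearMap.smulRight (1 : ℂ →L[ℂ] ℂ) (-(-1) / b ^ 2)).restrictScalars ℝ) z :=
    h3d.hasFDerivAt.restrictScalars ℝ
  have hF := (h1.mul h2).mul h3
  have hfd := hF.fderiv
  have hW : wdzbar (fun w => ((w.im ^ (κ - 1) : ℝ) : ℂ)
        * (𝔷 - (starRingEnd ℂ) w) ^ ((1 - κ : ℝ) : ℂ) * (𝔷 - w)⁻¹) z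
      = Complex.I / 2 * (((κ - 1) * z.im ^ (κ - 2) : ℝ) : ℂ) * a ^ ((-κ : ℝ) : ℂ) := by
    simp only [Pi.mul_def] at hfd
    rw [wdzbar, pdx, pdy, hfd]
    simp only [ContinuousLinearMap.add_apply, ContinuousLinearMap.smul_apply,
      ContinuousLinearMap.coe_smul', Pi.smul_apply, ContinuousLinearMap.coe_comp',
      Function.comp_apply, Complex.ofRealCLM_apply, Complex.imCLM_apply,
      ContinuousLinearMap.coe_restrictScalars', ContinuousLinearMap.smulRight_apply,
      ContinuousLinearMap.one_apply, ContinuousLinearMap.neg_apply,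
      ContinuousLinearEquiv.coe_coe, Complex.conjCLE_apply, Complex.one_im, Complex.I_im,
      map_one, Complex.conj_I, smul_eq_mul]
    rw [show (((1 - κ:ℝ):ℂ) - 1) = ((-κ:ℝ):ℂ) by push_cast; ring]
    have hA1 : a ^ ((1 - κ:ℝ):ℂ) = a * a ^ ((-κ:ℝ):ℂ) := by
      rw [show ((1 - κ:ℝ):ℂ) = 1 + ((-κ:ℝ):ℂ) by push_cast; ring, Complex.cpow_add _ _ ha,
        Complex.cpow_one]
    rw [hA1]
    have hY1 : ((z.im ^ (κ - 1) : ℝ):ℂ) = (z.im:ℂ) * ((z.im ^ (κ - 2) : ℝ):ℂ) := by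
      rw [show κ - 1 = 1 + (κ - 2) by ring, Real.rpow_add hy, Real.rpow_one]; push_cast; ring
    have hba : a = b + 2 * (z.im:ℂ) * Complex.I := by
      rw [ha_def, hb_def]
      have := Complex.sub_conj z
      rw [show 𝔷 - (starRingEnd ℂ) z = 𝔷 - z + (z - (starRingEnd ℂ) z) by ring, this]
      push_cast; ring
    rw [show κ - 1 - 1 = κ - 2 by ring, hY1, hba]
    generalize (b + 2 * (z.im:ℂ) * Complex.I) ^ ((-κ:ℝ):ℂ) = A
    push_cast
    generalize ((z.im ^ (κ - 2) : ℝ):ℂ) = Y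
    have hI3 : Complex.I ^ 3 = -Complex.I := by
      rw [pow_succ, Complex.I_sq]; ring
    field_simp
    ring_nf
    simp only [Complex.I_sq, hI3]
    ring
  rw [xiOp, hW]
  have harg : a.arg ≠ Real.pi := by
    intro h
    rcases Complex.arg_eq_pi_iff.1 h with ⟨_, h2⟩
    exact ha_im.ne' h2
  have hconj : (starRingEnd ℂ) (a ^ ((-κ : ℝ) : ℂ)) = ((starRingEnd ℂ) 𝔷 - z) ^ ((-κ : ℝ) : ℂ) := by
    have := Complex.conj_cpow a (((-κ : ℝ) : ℂ)) harg
    rw [Complex.conj_ofReal] at this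
    rw [← this, ha_def]
    simp [map_sub, Complex.conj_conj]
  simp only [map_mul, map_div₀, Complex.conj_I, Complex.conj_ofReal, map_ofNat, hconj]
  have hyyC : ((z.im ^ (2 - κ) : ℝ):ℂ) * ((z.im ^ (κ - 2) : ℝ):ℂ) = 1 := by
    rw [← Complex.ofReal_mul, ← Real.rpow_add hy, show 2 - κ + (κ - 2) = 0 by ring,
      Real.rpow_zero, Complex.ofReal_one]
  set C : ℂ := ((starRingEnd ℂ) 𝔷 - z) ^ ((-κ : ℝ) : ℂ)
  push_cast
  linear_combination (((κ:ℂ) - 1) * C) * hyyC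
    + (-(((κ:ℂ) - 1) * ((z.im ^ (2 - κ) : ℝ):ℂ) * ((z.im ^ (κ - 2) : ℝ):ℂ) * C)) * Complex.I_sq
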